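/- (Non-simpliciality and dimension of the basis, case m₃ = m₂ > m₁ ≥ 2) Assume m₃ = m₂ > m₁ ≥ 2. Then the convex hull of V₂ ∪ V₃ is an extreme subset of the convex hull of S with V₂ ∪ V₃ ≠ S, the set V₂ ∪ V₃ (of 2m₂ elements) is affinely dependent, and the affine span of V₂ ∪ V₃ has dimension 2m₂ − 2. In particular conv(S) is not a simplicial polytope. -/

import Mathlib

open Module

theorem stmt_11_kernel
    (n : ℕ)
    (S V1 V2 V3 : Finset (Fin (2 * n) → ℝ))
    (hScard : S.card = n + 2)
    (hunion : V1 ∪ V2 ∪ V3 = S)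
    (hd12 : Disjoint V1 V2) (hd13 : Disjoint V1 V3) (hd23 : Disjoint V2 V3)
    (hne2 : V2.Nonempty) (hne3 : V3.Nonempty)
    (hsum1 : ∑ v ∈ V1, v = fun _ => (1 : ℝ))
    (hsum2 : ∑ v ∈ V2, v = fun _ => (1 : ℝ))
    (hsum3 : ∑ v ∈ V3, v = fun _ => (1 : ℝ))
    (hspan : Module.finrank ℝ (Submodule.span ℝ (S : Set (Fin (2 * n) → ℝ))) = n)
    (c : (Fin (2 * n) → ℝ) → ℝ)
    (hc : ∑ v ∈ S, c v • v = 0) :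
    ∃ a b : ℝ, (∀ v ∈ V1, c v = a + b) ∧ (∀ v ∈ V2, c v = -a) ∧ (∀ v ∈ V3, c v = -b) := by
  classical
  set L : ({x // x ∈ S} → ℝ) →ₗ[ℝ] (Fin (2 * n) → ℝ) :=
    Fintype.linearCombination ℝ (fun v : {x // x ∈ S} => (v : Fin (2 * n) → ℝ)) with hL
  have hLapply : ∀ f : (Fin (2 * n) → ℝ) → ℝ,
      L (fun v => f ↑v) = ∑ v ∈ S, f v • v := by
    intro f
    rw [hL, Fintype.linearCombination_apply]
    exact Finset.sum_coe_sort S (fun v => f v • v)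
  have hrange : LinearMap.range L = Submodule.span ℝ (S : Set (Fin (2 * n) → ℝ)) := by
    rw [hL, Fintype.range_linearCombination]
    congr 1
    exact Subtype.range_coe
  have hker : finrank ℝ (LinearMap.ker L) = 2 := by
    have h1 := LinearMap.finrank_range_add_finrank_ker L
    rw [hrange, hspan, Module.finrank_pi, Fintype.card_coe, hScard] at h1
    omega
  have hW1 : V1 ⊆ S := by rw [← hunion]; intro x hx; exact Finset.mem_union_left _ (Finset.mem_union_left _ hx)
  have hW2 : V2 ⊆ S := by rw [← hunion]; intro x hx; exact Finset.mem_union_left _ (Finset.mem_union_right _ hx)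
  have hW3 : V3 ⊆ S := by rw [← hunion]; intro x hx; exact Finset.mem_union_right _ hx
  set ρ1 : (Fin (2 * n) → ℝ) → ℝ :=
    fun v => (if v ∈ V1 then (1:ℝ) else 0) - (if v ∈ V2 then (1:ℝ) else 0) with hρ1
  set ρ2 : (Fin (2 * n) → ℝ) → ℝ :=
    fun v => (if v ∈ V1 then (1:ℝ) else 0) - (if v ∈ V3 then (1:ℝ) else 0) with hρ2
  set r1 : {x // x ∈ S} → ℝ := fun v => ρ1 ↑v with hr1
  set r2 : {x // x ∈ S} → ℝ := fun v => ρ2 ↑v with hr2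
  have key : ∀ (W : Finset (Fin (2 * n) → ℝ)), W ⊆ S → (∑ v ∈ W, v = fun _ => (1:ℝ)) →
      ∑ v ∈ S, (if v ∈ W then (1:ℝ) else 0) • v = fun _ => (1:ℝ) := by
    intro W hWS hWsum
    have h2 : ∑ v ∈ S, (if v ∈ W then (1:ℝ) else 0) • v = ∑ v ∈ S, (if v ∈ W then v else 0) := by
      apply Finset.sum_congr rfl; intro v _; split <;> simp
    rw [h2, Finset.sum_ite_mem, Finset.inter_eq_right.mpr hWS]
    exact hWsum
  have hker1 : r1 ∈ LinearMap.ker L := by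
    rw [LinearMap.mem_ker, hr1, hLapply ρ1]
    have h2 : ∀ v ∈ S, ρ1 v • v
        = (if v ∈ V1 then (1:ℝ) else 0) • v - (if v ∈ V2 then (1:ℝ) else 0) • v := by
      intro v _; rw [hρ1]; simp [sub_smul]
    rw [Finset.sum_congr rfl h2, Finset.sum_sub_distrib, key V1 hW1 hsum1, key V2 hW2 hsum2]
    simp
  have hker2 : r2 ∈ LinearMap.ker L := by
    rw [LinearMap.mem_ker, hr2, hLapply ρ2]
    have h2 : ∀ v ∈ S, ρ2 v • v
        = (if v ∈ V1 then (1:ℝ) else 0) • v - (if v ∈ V3 then (1:ℝ) else 0) • v := by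
      intro v _; rw [hρ2]; simp [sub_smul]
    rw [Finset.sum_congr rfl h2, Finset.sum_sub_distrib, key V1 hW1 hsum1, key V3 hW3 hsum3]
    simp
  obtain ⟨v2, hv2⟩ := hne2
  obtain ⟨v3, hv3⟩ := hne3
  have hv2n1 : v2 ∉ V1 := fun h => (Finset.disjoint_left.mp hd12) h hv2
  have hv2n3 : v2 ∉ V3 := fun h => (Finset.disjoint_left.mp hd23) hv2 h
  have hv3n1 : v3 ∉ V1 := fun h => (Finset.disjoint_left.mp hd13) h hv3
  have hv3n2 : v3 ∉ V2 := fun h => (Finset.disjoint_left.mp hd23) h hv3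
  have hli : LinearIndependent ℝ ![r1, r2] := by
    rw [LinearIndependent.pair_iff]
    intro s t hst
    have e2 : (s • r1 + t • r2) ⟨v2, hW2 hv2⟩ = 0 := by rw [hst]; rfl
    have e3 : (s • r1 + t • r2) ⟨v3, hW3 hv3⟩ = 0 := by rw [hst]; rfl
    simp only [Pi.add_apply, Pi.smul_apply, hr1, hr2, hρ1, hρ2, smul_eq_mul] at e2 e3
    rw [if_neg hv2n1, if_pos hv2, if_neg hv2n3] at e2
    rw [if_neg hv3n1, if_neg hv3n2, if_pos hv3] at e3
    constructor <;> linarith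
  have hspan2 : Submodule.span ℝ {r1, r2} = LinearMap.ker L := by
    apply Submodule.eq_of_le_of_finrank_le
    · rw [Submodule.span_le]
      intro x hx
      rcases hx with h | h
      · rw [h]; exact hker1
      · rw [Set.mem_singleton_iff.mp h]; exact hker2
    · rw [hker]
      have hrg : Set.range ![r1, r2] = {r1, r2} := by
        rw [Set.range_eq_iff]
        constructor
        · intro i; fin_cases i <;> simp
        · intro y hy; rcases hy with h | h
          · exact ⟨0, h.symm⟩
          · exact ⟨1, (Set.mem_singleton_iff.mp h).symm⟩
      rw [← hrg, finrank_span_eq_card hli]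
      simp
  have hcmem : (fun v : {x // x ∈ S} => c (v : Fin (2 * n) → ℝ)) ∈ LinearMap.ker L := by
    rw [LinearMap.mem_ker, hLapply c]
    exact hc
  rw [← hspan2, Submodule.mem_span_pair] at hcmem
  obtain ⟨a, b, hab⟩ := hcmem
  refine ⟨a, b, ?_, ?_, ?_⟩
  · intro v hv
    have h3 := congrFun hab ⟨v, hW1 hv⟩
    simp only [Pi.add_apply, Pi.smul_apply, hr1, hr2, hρ1, hρ2, smul_eq_mul] at h3
    rw [if_pos hv, if_neg (fun h => (Finset.disjoint_left.mp hd12) hv h),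
      if_neg (fun h => (Finset.disjoint_left.mp hd13) hv h)] at h3
    linarith
  · intro v hv
    have h3 := congrFun hab ⟨v, hW2 hv⟩
    simp only [Pi.add_apply, Pi.smul_apply, hr1, hr2, hρ1, hρ2, smul_eq_mul] at h3
    rw [if_pos hv, if_neg (fun h => (Finset.disjoint_left.mp hd12) h hv),
      if_neg (fun h => (Finset.disjoint_left.mp hd23) hv h)] at h3
    linarith
  · intro v hv
    have h3 := congrFun hab ⟨v, hW3 hv⟩
    simp only [Pi.add_apply, Pi.smul_apply, hr1, hr2, hρ1, hρ2, smul_eq_mul] at h3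
    rw [if_pos hv, if_neg (fun h => (Finset.disjoint_left.mp hd13) h hv),
      if_neg (fun h => (Finset.disjoint_left.mp hd23) h hv)] at h3
    linarith
open Module

theorem stmt_11
    (n : ℕ) (hn : 0 < n)
    (S V1 V2 V3 : Finset (Fin (2 * n) → ℝ))
    (h01 : ∀ v ∈ S, ∀ i, v i = 0 ∨ v i = 1)
    (hScard : S.card = n + 2)
    (hunion : V1 ∪ V2 ∪ V3 = S)
    (hd12 : Disjoint V1 V2) (hd13 : Disjoint V1 V3) (hd23 : Disjoint V2 V3)
    (hne1 : V1.Nonempty) (hne2 : V2.Nonempty) (hne3 : V3.Nonempty)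
    (hsum1 : ∑ v ∈ V1, v = fun _ => (1 : ℝ))
    (hsum2 : ∑ v ∈ V2, v = fun _ => (1 : ℝ))
    (hsum3 : ∑ v ∈ V3, v = fun _ => (1 : ℝ))
    (hspan : Module.finrank ℝ (Submodule.span ℝ (S : Set (Fin (2 * n) → ℝ))) = n)
    (hm1 : 2 ≤ V1.card) (h12 : V1.card < V2.card) (h23 : V3.card = V2.card)
    : IsExtreme ℝ (convexHull ℝ (S : Set (Fin (2 * n) → ℝ)))
        (convexHull ℝ ((V2 ∪ V3 : Finset (Fin (2 * n) → ℝ)) : Set (Fin (2 * n) → ℝ))) ∧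
      V2 ∪ V3 ≠ S ∧
      (V2 ∪ V3).card = 2 * V2.card ∧
      ¬ AffineIndependent ℝ (fun x : {x // x ∈ V2 ∪ V3} => (x : Fin (2 * n) → ℝ)) ∧
      Module.finrank ℝ
        (affineSpan ℝ ((V2 ∪ V3 : Finset (Fin (2 * n) → ℝ)) : Set (Fin (2 * n) → ℝ))).direction =
        2 * V2.card - 2 ∧
      ¬ (∀ F ⊆ S, F.Nonempty → F ≠ S →
          IsExtreme ℝ (convexHull ℝ (S : Set (Fin (2 * n) → ℝ)))
            (convexHull ℝ (F : Set (Fin (2 * n) → ℝ))) →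
          AffineIndependent ℝ (fun x : {x // x ∈ F} => (x : Fin (2 * n) → ℝ))) := by
  classical
  have key := stmt_11_kernel n S V1 V2 V3 hScard hunion hd12 hd13 hd23 hne2 hne3
    hsum1 hsum2 hsum3 hspan
  set T : Finset (Fin (2 * n) → ℝ) := V2 ∪ V3 with hT
  have hd1T : Disjoint V1 T := Finset.disjoint_union_right.mpr ⟨hd12, hd13⟩
  have hSsplit : S = V1 ∪ T := by rw [← hunion, hT, Finset.union_assoc]
  have hTS : T ⊆ S := by rw [hSsplit]; exact Finset.subset_union_right
  have hW1 : V1 ⊆ S := by rw [hSsplit]; exact Finset.subset_union_left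
  have hW2 : V2 ⊆ S := fun x hx => hTS (Finset.mem_union_left _ hx)
  have hW3 : V3 ⊆ S := fun x hx => hTS (Finset.mem_union_right _ hx)
  have hTcard : T.card = 2 * V2.card := by
    rw [hT, Finset.card_union_of_disjoint hd23, h23]; ring
  obtain ⟨v1, hv1⟩ := hne1
  obtain ⟨v2, hv2⟩ := hne2
  obtain ⟨v3, hv3⟩ := hne3
  -- the zero-coefficients-on-V1 helper
  have hzero : ∀ c : (Fin (2 * n) → ℝ) → ℝ, (∑ v ∈ S, c v • v = 0) → (∑ v ∈ S, c v = 0) →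
      ∀ v ∈ V1, c v = 0 := by
    intro c hc hcs
    obtain ⟨a, b, h1, h2, h3⟩ := key c hc
    have hsum : (V1.card : ℝ) * (a + b) + (V2.card : ℝ) * (-a) + (V3.card : ℝ) * (-b) = 0 := by
      rw [← hcs, hSsplit, Finset.sum_union hd1T, hT, Finset.sum_union hd23,
        Finset.sum_congr rfl h1, Finset.sum_congr rfl h2, Finset.sum_congr rfl h3,
        Finset.sum_const, Finset.sum_const, Finset.sum_const, nsmul_eq_mul, nsmul_eq_mul,
        nsmul_eq_mul]
      ring
    have hab : a + b = 0 := by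
      have hcast : (V1.card : ℝ) < (V2.card : ℝ) := by exact_mod_cast h12
      have h23' : (V3.card : ℝ) = (V2.card : ℝ) := by exact_mod_cast h23
      rw [h23'] at hsum
      have : ((V1.card : ℝ) - V2.card) * (a + b) = 0 := by ring_nf; ring_nf at hsum; linarith
      rcases mul_eq_zero.mp this with h | h
      · linarith
      · exact h
    intro v hv; rw [h1 v hv, hab]
  -- Claim: extreme
  have claim_ext : IsExtreme ℝ (convexHull ℝ (S : Set (Fin (2 * n) → ℝ)))
      (convexHull ℝ (T : Set (Fin (2 * n) → ℝ))) := by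
    constructor
    · exact convexHull_mono (Finset.coe_subset.mpr hTS)
    · intro x1 hx1 x2 hx2 x hx hseg
      rw [Finset.convexHull_eq] at hx1 hx2 hx
      obtain ⟨w1, hw1n, hw1s, hw1c⟩ := hx1
      obtain ⟨w2, hw2n, hw2s, hw2c⟩ := hx2
      obtain ⟨wT, hwTn, hwTs, hwTc⟩ := hx
      rw [Finset.centerMass_eq_of_sum_1 _ _ hw1s] at hw1c
      rw [Finset.centerMass_eq_of_sum_1 _ _ hw2s] at hw2c
      rw [Finset.centerMass_eq_of_sum_1 _ _ hwTs] at hwTc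
      simp only [id] at hw1c hw2c hwTc
      obtain ⟨t, u, ht, hu, htu, hx12⟩ := hseg
      set c : (Fin (2 * n) → ℝ) → ℝ :=
        fun v => t * w1 v + u * w2 v - (if v ∈ T then wT v else 0) with hcdef
      have hsum_ite : ∀ f : (Fin (2 * n) → ℝ) → (Fin (2 * n) → ℝ),
          ∑ v ∈ S, (if v ∈ T then f v else 0) = ∑ v ∈ T, f v := by
        intro f; rw [Finset.sum_ite_mem, Finset.inter_eq_right.mpr hTS]
      have hc1 : ∑ v ∈ S, c v • v = 0 := by
        have e : ∀ v ∈ S, c v • v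
            = t • (w1 v • v) + u • (w2 v • v) - (if v ∈ T then wT v • v else 0) := by
          intro v _
          rw [hcdef]
          simp only [sub_smul, add_smul, smul_smul]
          congr 1
          split <;> simp
        rw [Finset.sum_congr rfl e, Finset.sum_sub_distrib, Finset.sum_add_distrib,
          ← Finset.smul_sum, ← Finset.smul_sum, hw1c, hw2c,
          hsum_ite (fun v => wT v • v), hwTc, hx12]
        simp
      have hc2 : ∑ v ∈ S, c v = 0 := by
        have e : ∀ v ∈ S, c v = t * w1 v + u * w2 v - (if v ∈ T then wT v else 0) :=
          fun v _ => rfl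
        have hiw : ∑ v ∈ S, (if v ∈ T then wT v else 0) = ∑ v ∈ T, wT v := by
          rw [Finset.sum_ite_mem, Finset.inter_eq_right.mpr hTS]
        rw [Finset.sum_congr rfl e, Finset.sum_sub_distrib, Finset.sum_add_distrib,
          ← Finset.mul_sum, ← Finset.mul_sum, hw1s, hw2s, hiw, hwTs]
        linarith
      have hV1zero : ∀ v ∈ V1, w1 v = 0 ∧ w2 v = 0 := by
        intro v hv
        have h0 := hzero c hc1 hc2 v hv
        have hvT : v ∉ T := Finset.disjoint_left.mp hd1T hv
        rw [hcdef] at h0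
        simp only [if_neg hvT, sub_zero] at h0
        have hw1v := hw1n v (hW1 hv)
        have hw2v := hw2n v (hW1 hv)
        constructor <;> nlinarith
      have hmem : ∀ (w : (Fin (2 * n) → ℝ) → ℝ), (∀ y ∈ S, 0 ≤ w y) → (∑ y ∈ S, w y = 1) →
          (∀ v ∈ V1, w v = 0) → (∑ y ∈ S, w y • y) ∈ convexHull ℝ (T : Set (Fin (2 * n) → ℝ)) := by
        intro w hwn hws hwz
        have hsplit : ∑ y ∈ S, w y = ∑ y ∈ V1, w y + ∑ y ∈ T, w y := by
          rw [hSsplit, Finset.sum_union hd1T]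
        have hz1 : ∑ y ∈ V1, w y = 0 := Finset.sum_eq_zero hwz
        have hz2 : ∑ y ∈ V1, w y • y = 0 :=
          Finset.sum_eq_zero (fun y hy => by rw [hwz y hy, zero_smul])
        have hsplit2 : ∑ y ∈ S, w y • y = ∑ y ∈ T, w y • y := by
          rw [hSsplit, Finset.sum_union hd1T, hz2, zero_add]
        rw [hsplit2, Finset.convexHull_eq]
        refine ⟨w, fun y hy => hwn y (hTS hy), ?_, ?_⟩
        · rw [← hws, hsplit, hz1, zero_add]
        · rw [Finset.centerMass_eq_of_sum_1]
          · simp only [id]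
          · rw [← hws, hsplit, hz1, zero_add]
      rw [← hw1c]; exact hmem w1 hw1n hw1s (fun v hv => (hV1zero v hv).1)
  -- Claim : T ≠ S
  have claim_ne : T ≠ S := by
    intro h
    have : v1 ∈ T := by rw [h]; exact hW1 hv1
    exact Finset.disjoint_left.mp hd1T hv1 this
  -- Claim: affine dependence
  have claim_dep : ¬ AffineIndependent ℝ (fun x : {x // x ∈ T} => (x : Fin (2 * n) → ℝ)) := by
    intro hAI
    rw [affineIndependent_iff] at hAI
    set w : {x // x ∈ T} → ℝ := fun x => if (x : Fin (2 * n) → ℝ) ∈ V2 then 1 else -1 with hw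
    have hs1 : ∑ e : {x // x ∈ T}, w e = 0 := by
      rw [hw]
      rw [Finset.sum_coe_sort T (fun v => if v ∈ V2 then (1:ℝ) else -1)]
      rw [hT, Finset.sum_union hd23]
      have e2 : ∀ v ∈ V2, (if v ∈ V2 then (1:ℝ) else -1) = 1 := fun v hv => if_pos hv
      have e3 : ∀ v ∈ V3, (if v ∈ V2 then (1:ℝ) else -1) = -1 := fun v hv =>
        if_neg (fun h => Finset.disjoint_left.mp hd23 h hv)
      rw [Finset.sum_congr rfl e2, Finset.sum_congr rfl e3, Finset.sum_const, Finset.sum_const,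
        nsmul_eq_mul, nsmul_eq_mul, h23]
      ring
    have hs2 : ∑ e : {x // x ∈ T}, w e • (e : Fin (2 * n) → ℝ) = 0 := by
      rw [hw]
      rw [Finset.sum_coe_sort T (fun v => (if v ∈ V2 then (1:ℝ) else -1) • v)]
      rw [hT, Finset.sum_union hd23]
      have e2 : ∀ v ∈ V2, (if v ∈ V2 then (1:ℝ) else -1) • v = v := fun v hv => by
        rw [if_pos hv, one_smul]
      have e3 : ∀ v ∈ V3, (if v ∈ V2 then (1:ℝ) else -1) • v = -v := fun v hv => by
        rw [if_neg (fun h => Finset.disjoint_left.mp hd23 h hv), neg_smul, one_smul]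
      rw [Finset.sum_congr rfl e2, Finset.sum_congr rfl e3, Finset.sum_neg_distrib,
        hsum2, hsum3]
      simp
    have := hAI Finset.univ w hs1 hs2
      ⟨v2, Finset.mem_union_left _ hv2⟩ (Finset.mem_univ _)
    rw [hw] at this
    simp only [if_pos hv2] at this
    exact one_ne_zero this
  -- Claim: rank
  have claim_rank : Module.finrank ℝ
      (affineSpan ℝ (T : Set (Fin (2 * n) → ℝ))).direction = 2 * V2.card - 2 := by
    have hpT : v2 ∈ T := Finset.mem_union_left _ hv2
    have hqT : v3 ∈ T := Finset.mem_union_right _ hv3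
    have hpq : v2 ≠ v3 := fun h => Finset.disjoint_left.mp hd23 hv2 (h ▸ hv3)
    set T' : Finset (Fin (2 * n) → ℝ) := (T.erase v2).erase v3 with hT'
    have hqT2 : v3 ∈ T.erase v2 := Finset.mem_erase.mpr ⟨fun h => hpq h.symm, hqT⟩
    have hT'card : T'.card = 2 * V2.card - 2 := by
      rw [hT', Finset.card_erase_of_mem hqT2, Finset.card_erase_of_mem hpT]
      omega
    have hT'T : T' ⊆ T := (Finset.erase_subset _ _).trans (Finset.erase_subset _ _)
    have hv2nT' : v2 ∉ T' := fun h =>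
      Finset.notMem_erase v2 T (Finset.mem_of_mem_erase h)
    have hv3nT' : v3 ∉ T' := Finset.notMem_erase _ _
    have hV2sub : V2.erase v2 ⊆ T' := by
      intro x hx
      obtain ⟨hxne, hxV2⟩ := Finset.mem_erase.mp hx
      refine Finset.mem_erase.mpr ⟨fun h => ?_, Finset.mem_erase.mpr
        ⟨hxne, Finset.mem_union_left _ hxV2⟩⟩
      exact Finset.disjoint_left.mp hd23 hxV2 (h ▸ hv3)
    have hV3sub : V3.erase v3 ⊆ T' := by
      intro x hx
      obtain ⟨hxne, hxV3⟩ := Finset.mem_erase.mp hx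
      refine Finset.mem_erase.mpr ⟨hxne, Finset.mem_erase.mpr
        ⟨fun h => ?_, Finset.mem_union_right _ hxV3⟩⟩
      exact Finset.disjoint_left.mp hd23 hv2 (h ▸ hxV3)
    have hfam : LinearIndependent ℝ
        (fun v : {x // x ∈ T'} => (v : Fin (2 * n) → ℝ) - v2) := by
      rw [Fintype.linearIndependent_iff]
      intro g hg i
      set c : (Fin (2 * n) → ℝ) → ℝ :=
        fun v => if h : v ∈ T' then g ⟨v, h⟩ else if v = v2 then -(∑ j, g j) else 0 with hcdef
      have hcT' : ∀ (j : {x // x ∈ T'}), c ↑j = g j := fun j => dif_pos j.2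
      have hcp : c v2 = -(∑ j, g j) := by simp only [hcdef]; rw [dif_neg hv2nT']; simp
      have hcq : c v3 = 0 := by
        simp only [hcdef]; rw [dif_neg hv3nT', if_neg (fun h => hpq h.symm)]
      have hcV1 : ∀ v ∈ V1, c v = 0 := by
        intro v hv
        have h1 : v ∉ T' := fun h => Finset.disjoint_left.mp hd1T hv (hT'T h)
        have h2 : v ≠ v2 := fun h => Finset.disjoint_left.mp hd1T hv (h ▸ hpT)
        simp only [hcdef]; rw [dif_neg h1, if_neg h2]
      have hTsplit : T = insert v2 (insert v3 T') := by
        rw [hT', Finset.insert_erase hqT2, Finset.insert_erase hpT]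
      have hv2ni : v2 ∉ insert v3 T' := by
        rw [Finset.mem_insert]
        rintro (h | h)
        · exact hpq h
        · exact hv2nT' h
      have hexp : ∑ j : {x // x ∈ T'}, g j • ((j : Fin (2 * n) → ℝ) - v2)
          = (∑ j : {x // x ∈ T'}, g j • (j : Fin (2 * n) → ℝ)) - (∑ j : {x // x ∈ T'}, g j) • v2 := by
        rw [Finset.sum_smul]
        rw [← Finset.sum_sub_distrib]
        exact Finset.sum_congr rfl (fun j _ => smul_sub _ _ _)
      have h5 : ∑ j : {x // x ∈ T'}, g j • ((j : Fin (2 * n) → ℝ))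
          = (∑ j : {x // x ∈ T'}, g j) • v2 := by
        rw [hexp] at hg; exact sub_eq_zero.mp hg
      have hc : ∑ v ∈ S, c v • v = 0 := by
        rw [hSsplit, Finset.sum_union hd1T]
        have hz : ∑ v ∈ V1, c v • v = 0 :=
          Finset.sum_eq_zero (fun v hv => by rw [hcV1 v hv, zero_smul])
        rw [hz, zero_add, hTsplit, Finset.sum_insert hv2ni, Finset.sum_insert hv3nT',
          hcp, hcq, zero_smul, zero_add]
        have h4 : ∑ v ∈ T', c v • v = ∑ j : {x // x ∈ T'}, g j • (j : Fin (2 * n) → ℝ) := by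
          rw [← Finset.sum_coe_sort T' (fun v => c v • v)]
          exact Finset.sum_congr rfl (fun j _ => by rw [hcT' j])
        rw [h4, h5, neg_smul, neg_add_cancel]
      obtain ⟨a, b, h1, h2, h3⟩ := key c hc
      have hab : a + b = 0 := by rw [← hcV1 v1 hv1, h1 v1 hv1]
      have hb : b = 0 := by have := h3 v3 hv3; rw [hcq] at this; linarith
      have ha : a = 0 := by linarith
      have hiT : (i : Fin (2 * n) → ℝ) ∈ T := hT'T i.2
      rw [← hcT' i]
      rcases Finset.mem_union.mp hiT with h | h
      · rw [h2 _ h, ha, neg_zero]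
      · rw [h3 _ h, hb, neg_zero]
    -- the spanning relation
    have hrel : (v3 : Fin (2 * n) → ℝ) - v2
        = (∑ v ∈ V2.erase v2, (v - v2)) - (∑ v ∈ V3.erase v3, (v - v2)) := by
      have hs2' : ∑ v ∈ V2.erase v2, v = (fun _ => (1:ℝ)) - v2 := by
        have h6 := Finset.sum_erase_add V2 id hv2
        simp only [id] at h6
        rw [hsum2] at h6
        exact eq_sub_of_add_eq h6
      have hs3' : ∑ v ∈ V3.erase v3, v = (fun _ => (1:ℝ)) - v3 := by
        have h6 := Finset.sum_erase_add V3 id hv3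
        simp only [id] at h6
        rw [hsum3] at h6
        exact eq_sub_of_add_eq h6
      have hk : (V3.erase v3).card = (V2.erase v2).card := by
        rw [Finset.card_erase_of_mem hv3, Finset.card_erase_of_mem hv2, h23]
      rw [Finset.sum_sub_distrib, Finset.sum_sub_distrib, Finset.sum_const, Finset.sum_const,
        hs2', hs3', hk]
      abel
    have hrel_mem : (v3 : Fin (2 * n) → ℝ) - v2
        ∈ Submodule.span ℝ ((fun x => x - v2) '' (T' : Set (Fin (2 * n) → ℝ))) := by
      rw [hrel]
      refine sub_mem (Submodule.sum_mem _ fun v hv => Submodule.subset_span ⟨v, ?_, rfl⟩)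
        (Submodule.sum_mem _ fun v hv => Submodule.subset_span ⟨v, ?_, rfl⟩)
      · exact_mod_cast hV2sub hv
      · exact_mod_cast hV3sub hv
    have h1 : vectorSpan ℝ (T : Set (Fin (2 * n) → ℝ))
        = Submodule.span ℝ ((fun x => x - v2) '' (T : Set (Fin (2 * n) → ℝ))) := by
      rw [vectorSpan_eq_span_vsub_set_right ℝ (show (v2 : Fin (2 * n) → ℝ) ∈ (T : Set (Fin (2 * n) → ℝ)) from hpT)]
      simp only [vsub_eq_sub]
    have h2 : Submodule.span ℝ ((fun x => x - v2) '' (T : Set (Fin (2 * n) → ℝ)))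
        = Submodule.span ℝ ((fun x => x - v2) '' (T' : Set (Fin (2 * n) → ℝ))) := by
      apply le_antisymm
      · rw [Submodule.span_le]
        rintro _ ⟨v, hvT, rfl⟩
        dsimp only
        by_cases hvp : v = v2
        · rw [hvp, sub_self]; exact Submodule.zero_mem _
        by_cases hvq : v = v3
        · rw [hvq]; exact hrel_mem
        · refine Submodule.subset_span ⟨v, ?_, rfl⟩
          have hvT' : v ∈ T' := Finset.mem_erase.mpr ⟨hvq, Finset.mem_erase.mpr ⟨hvp, by exact_mod_cast hvT⟩⟩
          exact_mod_cast hvT'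
      · exact Submodule.span_mono (Set.image_mono (by exact_mod_cast hT'T))
    have h3 : ((fun x => x - v2) '' (T' : Set (Fin (2 * n) → ℝ)))
        = Set.range (fun v : {x // x ∈ T'} => (v : Fin (2 * n) → ℝ) - v2) :=
      Set.image_eq_range _ _
    rw [direction_affineSpan, h1, h2, h3, finrank_span_eq_card hfam, Fintype.card_coe, hT'card]
  refine ⟨claim_ext, claim_ne, hTcard, claim_dep, claim_rank, ?_⟩
  intro hF
  exact claim_dep (hF T hTS ⟨v2, Finset.mem_union_left _ hv2⟩ claim_ne claim_ext)
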